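/- Let $X_1, \ldots, X_n$ be independent with $X_i \sim \mathrm{Exp}((n-i+1)^2)$, $Y_k = \sum_{i=1}^k X_i$. For $\ell \geq 1$ and $n \geq 6\ell$: $\mathbb{P}(Y_{n-\ell} < \frac{1}{6\ell}) \leq \frac{12}{\ell}$ and $\mathbb{P}(Y_{n-\ell} > \frac{7}{6\ell}) \leq \frac{12}{\ell}$. -/

import Mathlib

open MeasureTheory ProbabilityTheory Finset Real
open scoped NNReal ENNReal

namespace Stmt14Aux

lemma expMeasure_eq_withDensity (r : ℝ) :
    expMeasure r = volume.withDensity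
      (fun x => ((exponentialPDFReal r x).toNNReal : ℝ≥0∞)) := rfl

lemma pdf_mul_pow (r : ℝ) (k : ℕ) (hk : k ≠ 0) :
    (fun x : ℝ => exponentialPDFReal r x * x ^ k)
      = (Set.Ioi (0:ℝ)).indicator (fun x => r * (x ^ k * Real.exp (-(r * x)))) := by
  funext x
  simp only [exponentialPDFReal, gammaPDFReal, Real.Gamma_one, Real.rpow_one, sub_self,
    Real.rpow_zero, div_one, mul_one]
  rcases lt_trichotomy x 0 with h | h | h
  · rw [if_neg (not_le.mpr h), Set.indicator_of_notMem (by simpa using h.le), zero_mul]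
  · subst h
    rw [if_pos le_rfl, Set.indicator_of_notMem (by simp), zero_pow hk, mul_zero]
  · rw [if_pos h.le, Set.indicator_of_mem (Set.mem_Ioi.mpr h)]
    ring

lemma moment (r : ℝ) (hr : 0 < r) (k : ℕ) (hk : k ≠ 0) :
    ∫ x, x ^ k ∂(expMeasure r) = (Nat.factorial k : ℝ) / r ^ k := by
  rw [expMeasure_eq_withDensity r,
    integral_withDensity_eq_integral_smul ((measurable_exponentialPDFReal r).real_toNNReal) _]
  simp_rw [NNReal.smul_def, Real.coe_toNNReal _ (exponentialPDFReal_nonneg hr _), smul_eq_mul]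
  rw [pdf_mul_pow r k hk, integral_indicator measurableSet_Ioi, integral_const_mul]
  rw [show ∫ x in Set.Ioi (0:ℝ), x ^ k * Real.exp (-(r*x))
      = ∫ x in Set.Ioi (0:ℝ), x ^ (((k:ℝ)+1) - 1) * Real.exp (-(r*x)) from
    setIntegral_congr_fun measurableSet_Ioi (fun x _ => by
      rw [show ((k:ℝ)+1)-1 = (k:ℝ) by ring, Real.rpow_natCast]),
    Real.integral_rpow_mul_exp_neg_mul_Ioi (by positivity) hr,
    Real.Gamma_nat_eq_factorial,
    show ((k:ℝ)+1) = ((k+1 : ℕ):ℝ) by push_cast; ring, Real.rpow_natCast]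
  field_simp
  rw [one_div, inv_pow, pow_succ]; field_simp [hr.ne']

lemma integrablePow (r : ℝ) (hr : 0 < r) (k : ℕ) (hk : k ≠ 0) :
    Integrable (fun x : ℝ => x ^ k) (expMeasure r) := by
  rw [expMeasure_eq_withDensity r,
    integrable_withDensity_iff_integrable_coe_smul
      ((measurable_exponentialPDFReal r).real_toNNReal)]
  simp_rw [smul_eq_mul, Real.coe_toNNReal _ (exponentialPDFReal_nonneg hr _)]
  rw [pdf_mul_pow r k hk, integrable_indicator_iff measurableSet_Ioi]
  have h := integrableOn_rpow_mul_exp_neg_mul_rpow (s := (k:ℝ)) (p := 1) (b := r)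
    (lt_of_lt_of_le (by norm_num) (Nat.cast_nonneg k)) zero_lt_one hr
  have h2 : IntegrableOn (fun x : ℝ => x ^ k * Real.exp (-(r * x))) (Set.Ioi 0) := by
    refine h.congr_fun (fun x hx => ?_) measurableSet_Ioi
    dsimp only
    rw [Real.rpow_natCast, Real.rpow_one, neg_mul]
  exact h2.const_mul r

lemma memL2 (r : ℝ) (hr : 0 < r) : MemLp (id : ℝ → ℝ) 2 (expMeasure r) :=
  (memLp_two_iff_integrable_sq aestronglyMeasurable_id).2
    (by simpa using integrablePow r hr 2 two_ne_zero)

lemma tele (f : ℕ → ℝ) (a : ℕ) : ∀ b, a ≤ b →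
    ∑ j ∈ Finset.Ico a b, (f j - f (j+1)) = f a - f b := by
  intro b hb
  induction b, hb using Nat.le_induction with
  | base => simp
  | succ b hb ih => rw [Finset.sum_Ico_succ_top hb, ih]; ring

lemma sq_upper (ℓ n : ℕ) (hℓ : 1 ≤ ℓ) (hn : ℓ ≤ n) :
    ∑ j ∈ Finset.Ico ℓ n, (1:ℝ)/((j:ℝ)+1)^2 ≤ 1/(ℓ:ℝ) := by
  have hL : (1:ℝ) ≤ (ℓ:ℝ) := by exact_mod_cast hℓ
  calc ∑ j ∈ Finset.Ico ℓ n, (1:ℝ)/((j:ℝ)+1)^2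
      ≤ ∑ j ∈ Finset.Ico ℓ n, ((1:ℝ)/(j:ℝ) - 1/((j:ℝ)+1)) := by
        refine Finset.sum_le_sum (fun j hj => ?_)
        have hx : (1:ℝ) ≤ (j:ℝ) := by
          exact_mod_cast hℓ.trans (Finset.mem_Ico.mp hj).1
        have h0 : (0:ℝ) < (j:ℝ) := by linarith
        rw [div_sub_div _ _ h0.ne' (by positivity), div_le_div_iff₀ (by positivity) (by positivity)]
        nlinarith
    _ = 1/(ℓ:ℝ) - 1/(n:ℝ) := by
        have := tele (fun m => 1/(m:ℝ)) ℓ n hn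
        push_cast at this ⊢
        linarith
    _ ≤ 1/(ℓ:ℝ) := by
        have : (0:ℝ) ≤ 1/(n:ℝ) := by positivity
        linarith

lemma sq_lower (ℓ n : ℕ) (hn : ℓ ≤ n) :
    1/((ℓ:ℝ)+1) - 1/((n:ℝ)+1) ≤ ∑ j ∈ Finset.Ico ℓ n, (1:ℝ)/((j:ℝ)+1)^2 := by
  have h1 : ∑ j ∈ Finset.Ico ℓ n, ((1:ℝ)/((j:ℝ)+1) - 1/((j:ℝ)+1+1))
      = 1/((ℓ:ℝ)+1) - 1/((n:ℝ)+1) := by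
    have := tele (fun m => 1/((m:ℝ)+1)) ℓ n hn
    push_cast at this ⊢
    linarith
  rw [← h1]
  refine Finset.sum_le_sum (fun j hj => ?_)
  have hx : (0:ℝ) ≤ (j:ℝ) := Nat.cast_nonneg j
  rw [div_sub_div _ _ (by positivity) (by positivity),
    div_le_div_iff₀ (by positivity) (by positivity)]
  nlinarith

lemma quart_upper (ℓ n : ℕ) (hℓ : 1 ≤ ℓ) (hn : ℓ ≤ n) :
    ∑ j ∈ Finset.Ico ℓ n, (1:ℝ)/((j:ℝ)+1)^4 ≤ 1/(3*(ℓ:ℝ)^3) := by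
  have hL : (1:ℝ) ≤ (ℓ:ℝ) := by exact_mod_cast hℓ
  calc ∑ j ∈ Finset.Ico ℓ n, (1:ℝ)/((j:ℝ)+1)^4
      ≤ ∑ j ∈ Finset.Ico ℓ n, ((1:ℝ)/(3*(j:ℝ)^3) - 1/(3*((j:ℝ)+1)^3)) := by
        refine Finset.sum_le_sum (fun j hj => ?_)
        have hx : (1:ℝ) ≤ (j:ℝ) := by
          exact_mod_cast hℓ.trans (Finset.mem_Ico.mp hj).1
        have h0 : (0:ℝ) < (j:ℝ) := by linarith
        rw [div_sub_div _ _ (by positivity) (by positivity),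
          div_le_div_iff₀ (by positivity) (by positivity)]
        nlinarith [pow_pos h0 3, pow_pos (show (0:ℝ) < (j:ℝ)+1 by linarith) 3, sq_nonneg (j:ℝ)]
    _ = 1/(3*(ℓ:ℝ)^3) - 1/(3*(n:ℝ)^3) := by
        have := tele (fun m => 1/(3*(m:ℝ)^3)) ℓ n hn
        simpa using this
    _ ≤ 1/(3*(ℓ:ℝ)^3) := by
        have : (0:ℝ) ≤ 1/(3*(n:ℝ)^3) := by positivity
        linarith

lemma reindex (g : ℕ → ℝ) (ℓ n : ℕ) (hℓ : 1 ≤ ℓ) (hn : ℓ ≤ n) :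
    ∑ i ∈ Finset.Icc 1 (n - ℓ), g (n - i + 1) = ∑ j ∈ Finset.Ico ℓ n, g (j + 1) := by
  refine Finset.sum_nbij' (i := fun i => n - i) (j := fun j => n - j) ?_ ?_ ?_ ?_ ?_ <;>
    intro a ha <;> simp only [Finset.mem_Icc, Finset.mem_Ico] at * <;> omega

end Stmt14Aux

/-- With `X i ~ Exp((n-i+1)²)` independent and `Y k = ∑_{i=1}^k X i`, for `ℓ ≥ 1` and
`n ≥ 6ℓ`: `P(Y (n-ℓ) < 1/(6ℓ)) ≤ 12/ℓ` and `P(Y (n-ℓ) > 7/(6ℓ)) ≤ 12/ℓ`. -/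
theorem stmt14
    {Ω : Type*} [MeasurableSpace Ω] (μ : Measure Ω) [IsProbabilityMeasure μ]
    (n : ℕ) (X : ℕ → Ω → ℝ)
    (hmeas : ∀ i, Measurable (X i))
    (hindep : iIndepFun X μ)
    (hdist : ∀ i ∈ Icc 1 n, μ.map (X i) = expMeasure (((n - i + 1 : ℕ) : ℝ) ^ 2))
    (Y : ℕ → Ω → ℝ) (hY : ∀ k ω, Y k ω = ∑ i ∈ Icc 1 k, X i ω)
    (ℓ : ℕ) (hℓ : 1 ≤ ℓ) (hn : 6 * ℓ ≤ n) :
    μ {ω | Y (n - ℓ) ω < 1 / (6 * (ℓ : ℝ))} ≤ ENNReal.ofReal (12 / (ℓ : ℝ)) ∧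
    μ {ω | 7 / (6 * (ℓ : ℝ)) < Y (n - ℓ) ω} ≤ ENNReal.ofReal (12 / (ℓ : ℝ)) := by
  classical
  have hLpos : (0:ℝ) < (ℓ:ℝ) := by exact_mod_cast hℓ
  have hℓn : ℓ ≤ n := le_trans (by omega) hn
  set s : Finset ℕ := Icc 1 (n - ℓ) with hs
  have hsub : s ⊆ Icc 1 n := Finset.Icc_subset_Icc_right (Nat.sub_le n ℓ)
  set c : ℕ → ℝ := fun i => ((n - i + 1 : ℕ) : ℝ) with hc
  have hcpos : ∀ i, 0 < c i := fun i => by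
    have h : (0:ℝ) < ((n - i + 1 : ℕ) : ℝ) := by exact_mod_cast Nat.succ_pos (n - i)
    simpa [hc] using h
  have hrpos : ∀ i, 0 < (c i)^2 := fun i => pow_pos (hcpos i) 2
  have hmap : ∀ i ∈ s, μ.map (X i) = expMeasure ((c i)^2) := fun i hi => hdist i (hsub hi)
  have hmem2 : ∀ i ∈ s, MemLp (X i) 2 μ := by
    intro i hi
    have h := Stmt14Aux.memL2 ((c i)^2) (hrpos i)
    rw [← hmap i hi] at h
    have := (memLp_map_measure_iff aestronglyMeasurable_id (hmeas i).aemeasurable).1 h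
    simpa using this
  have hint : ∀ i ∈ s, Integrable (X i) μ := fun i hi => (hmem2 i hi).integrable one_le_two
  have hE : ∀ i ∈ s, ∫ ω, X i ω ∂μ = 1 / (c i)^2 := by
    intro i hi
    have h1 : ∫ ω, X i ω ∂μ = ∫ x, x ∂(μ.map (X i)) :=
      (integral_map (hmeas i).aemeasurable aestronglyMeasurable_id).symm
    rw [h1, hmap i hi,
      show (∫ x, x ∂(expMeasure ((c i)^2))) = ∫ x, x ^ 1 ∂(expMeasure ((c i)^2)) by simp,
      Stmt14Aux.moment _ (hrpos i) 1 one_ne_zero]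
    simp [Nat.factorial]
  have hE2 : ∀ i ∈ s, ∫ ω, (X i ω)^2 ∂μ = 2 / ((c i)^2)^2 := by
    intro i hi
    have h1 : ∫ ω, (X i ω)^2 ∂μ = ∫ x, x^2 ∂(μ.map (X i)) :=
      (integral_map (hmeas i).aemeasurable ((continuous_pow 2).aestronglyMeasurable)).symm
    rw [h1, hmap i hi, Stmt14Aux.moment _ (hrpos i) 2 two_ne_zero]
    norm_num [Nat.factorial]
  have hVar : ∀ i ∈ s, variance (X i) μ = 1 / (c i)^4 := by
    intro i hi
    rw [variance_eq_sub (hmem2 i hi),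
      show μ[X i ^ 2] = ∫ ω, (X i ω)^2 ∂μ from rfl, hE2 i hi,
      show μ[X i] = ∫ ω, X i ω ∂μ from rfl, hE i hi]
    have hc0 : (c i) ≠ 0 := (hcpos i).ne'
    field_simp
    ring
  have hYsum : Y (n - ℓ) = ∑ i ∈ s, X i := by
    funext ω; rw [hY _ ω, Finset.sum_apply]
  have hmemY : MemLp (Y (n - ℓ)) 2 μ := by rw [hYsum]; exact memLp_finset_sum' s hmem2
  have hcast2 : ∀ j : ℕ, (1:ℝ)/(((j+1:ℕ)):ℝ)^2 = 1/((j:ℝ)+1)^2 := by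
    intro j; push_cast; ring
  have hcast4 : ∀ j : ℕ, (1:ℝ)/(((j+1:ℕ)):ℝ)^4 = 1/((j:ℝ)+1)^4 := by
    intro j; push_cast; ring
  have hEY : ∫ ω, Y (n-ℓ) ω ∂μ = ∑ j ∈ Finset.Ico ℓ n, (1:ℝ)/((j:ℝ)+1)^2 := by
    rw [show (∫ ω, Y (n-ℓ) ω ∂μ) = ∫ ω, (∑ i ∈ s, X i) ω ∂μ by rw [hYsum]]
    simp_rw [Finset.sum_apply]
    rw [integral_finset_sum s hint, Finset.sum_congr rfl hE,
      Stmt14Aux.reindex (fun m => 1/((m:ℝ))^2) ℓ n hℓ hℓn]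
    exact Finset.sum_congr rfl fun j _ => hcast2 j
  have hVarY : variance (Y (n-ℓ)) μ = ∑ j ∈ Finset.Ico ℓ n, (1:ℝ)/((j:ℝ)+1)^4 := by
    rw [hYsum, IndepFun.variance_sum hmem2
      (fun i _ j _ hij => hindep.indepFun hij), Finset.sum_congr rfl hVar,
      Stmt14Aux.reindex (fun m => 1/((m:ℝ))^4) ℓ n hℓ hℓn]
    exact Finset.sum_congr rfl fun j _ => hcast4 j
  have h6 : (6:ℝ) * (ℓ:ℝ) ≤ (n:ℝ) := by exact_mod_cast hn
  have hEu : ∫ ω, Y (n-ℓ) ω ∂μ ≤ 1/(ℓ:ℝ) := by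
    rw [hEY]; exact Stmt14Aux.sq_upper ℓ n hℓ hℓn
  have hEl : 1/(3*(ℓ:ℝ)) ≤ ∫ ω, Y (n-ℓ) ω ∂μ := by
    rw [hEY]
    refine le_trans ?_ (Stmt14Aux.sq_lower ℓ n hℓn)
    have hL1 : (1:ℝ) ≤ (ℓ:ℝ) := by exact_mod_cast hℓ
    have h1 : 1/(2*(ℓ:ℝ)) ≤ 1/((ℓ:ℝ)+1) :=
      one_div_le_one_div_of_le (by positivity) (by linarith)
    have h2 : 1/((n:ℝ)+1) ≤ 1/(6*(ℓ:ℝ)) :=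
      one_div_le_one_div_of_le (by positivity) (by linarith)
    have h3 : 1/(2*(ℓ:ℝ)) - 1/(6*(ℓ:ℝ)) = 1/(3*(ℓ:ℝ)) := by
      field_simp
      ring
    linarith
  have hVu : variance (Y (n-ℓ)) μ ≤ 1/(3*(ℓ:ℝ)^3) := by
    rw [hVarY]; exact Stmt14Aux.quart_upper ℓ n hℓ hℓn
  have hcpos' : (0:ℝ) < 1/(6*(ℓ:ℝ)) := by positivity
  have cheb := meas_ge_le_variance_div_sq (μ := μ) hmemY hcpos'
  have hbound : variance (Y (n-ℓ)) μ / (1/(6*(ℓ:ℝ)))^2 ≤ 12/(ℓ:ℝ) := by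
    rw [div_le_iff₀ (by positivity)]
    calc variance (Y (n-ℓ)) μ ≤ 1/(3*(ℓ:ℝ)^3) := hVu
      _ = 12/(ℓ:ℝ) * (1/(6*(ℓ:ℝ)))^2 := by field_simp; ring
  have cheb' : μ {ω | 1/(6*(ℓ:ℝ)) ≤ |Y (n-ℓ) ω - ∫ ω, Y (n-ℓ) ω ∂μ|}
      ≤ ENNReal.ofReal (12/(ℓ:ℝ)) :=
    le_trans cheb (ENNReal.ofReal_le_ofReal hbound)
  have h36 : 1/(3*(ℓ:ℝ)) - 1/(6*(ℓ:ℝ)) = 1/(6*(ℓ:ℝ)) := by field_simp; ring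
  have h76 : 7/(6*(ℓ:ℝ)) - 1/(ℓ:ℝ) = 1/(6*(ℓ:ℝ)) := by field_simp; ring
  constructor
  · refine le_trans (measure_mono ?_) cheb'
    intro ω hω
    simp only [Set.mem_setOf_eq] at *
    rw [le_abs]
    right
    linarith
  · refine le_trans (measure_mono ?_) cheb'
    intro ω hω
    simp only [Set.mem_setOf_eq] at *
    rw [le_abs]
    left
    linarith
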